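/- Let λ = 1/2 (so k = 0 since 0 < 1/2 ≤ 1/2), a, b > 0, s > 0, r = s/2, and α ∈ ℝ. With b_0 = -2a/(2b)^{1/2} and h_n = (2b)^{1/s}[ln n + (α/s)ln ln n + b_0 (ln n)^{1/2}]^{-1/s}, one has exp(2b/h_n^s + 2a/h_n^r)·h_n^α = O(n) as n → ∞. -/

import Mathlib

open Real Filter Asymptotics Topology

/-- The case `k = 0`, `λ = 1/2` (`r = s/2`): with `b_0 = -2a/(2b)^{1/2}` and
`h n = (2b)^{1/s}[log n + (α/s) log log n + b_0 (log n)^{1/2}]^{-1/s}`,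
one has `exp(2b/h^s + 2a/h^{s/2}) h^α = O(n)`. -/
theorem stmt13 (a b s α : ℝ) (ha : 0 < a) (hb : 0 < b) (hs : 0 < s)
    (b0 : ℝ) (hb0 : b0 = -(2*a) / (2*b) ^ ((1:ℝ)/2))
    (h : ℕ → ℝ)
    (hh : ∀ n : ℕ, h n = (2*b) ^ (1/s) *
      (Real.log n + (α/s) * Real.log (Real.log n)
        + b0 * (Real.log n) ^ ((1:ℝ)/2)) ^ (-(1/s))) :
    (fun n : ℕ => Real.exp (2*b / (h n) ^ s + 2*a / (h n) ^ (s/2)) * (h n) ^ α)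
      =O[atTop] (fun n : ℕ => (n : ℝ)) := by
  have hs' : s ≠ 0 := hs.ne'
  have h2b : (0:ℝ) < 2*b := by linarith
  set t : ℕ → ℝ := fun n => Real.log n with htdef
  set L : ℕ → ℝ := fun n => t n + (α/s) * Real.log (t n) + b0 * (t n) ^ ((1:ℝ)/2) with hLdef
  have htt : Tendsto t atTop atTop :=
    Real.tendsto_log_atTop.comp tendsto_natCast_atTop_atTop
  have htpos : ∀ᶠ n : ℕ in atTop, 0 < t n := htt.eventually_gt_atTop 0
  have h1 : Tendsto (fun n => Real.log (t n) / t n) atTop (𝓝 0) :=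
    Real.isLittleO_log_id_atTop.tendsto_div_nhds_zero.comp htt
  have h2 : Tendsto (fun n => (t n) ^ (-((1:ℝ)/2))) atTop (𝓝 0) :=
    (tendsto_rpow_neg_atTop (by norm_num : (0:ℝ) < 1/2)).comp htt
  -- L / t → 1
  have hLt : Tendsto (fun n => L n / t n) atTop (𝓝 1) := by
    have hlim : Tendsto (fun n : ℕ =>
        1 + (α/s) * (Real.log (t n) / t n) + b0 * (t n) ^ (-((1:ℝ)/2))) atTop
        (𝓝 (1 + (α/s) * 0 + b0 * 0)) :=
      ((tendsto_const_nhds.add (h1.const_mul (α/s))).add (h2.const_mul b0))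
    rw [show (1:ℝ) + (α/s) * 0 + b0 * 0 = 1 by ring] at hlim
    refine hlim.congr' ?_
    filter_upwards [htpos] with n hn
    have h12 : (t n) ^ (-((1:ℝ)/2)) = (t n) ^ ((1:ℝ)/2) / t n := by
      rw [show -((1:ℝ)/2) = 1/2 - 1 by norm_num, Real.rpow_sub hn, Real.rpow_one]
    rw [h12, hLdef]
    field_simp
  have hLpos : ∀ᶠ n : ℕ in atTop, 0 < L n := by
    filter_upwards [htpos, hLt.eventually (eventually_gt_nhds (by norm_num : (0:ℝ) < 1))]
      with n hn hn2
    have := mul_pos hn2 hn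
    rwa [div_mul_cancel₀ _ hn.ne'] at this
  -- t / L → 1
  have htL : Tendsto (fun n => t n / L n) atTop (𝓝 1) := by
    have := hLt.inv₀ one_ne_zero
    rw [inv_one] at this
    refine this.congr fun n => ?_
    rw [← one_div, one_div_div]
  -- (t/L)^(α/s) → 1
  have hA : Tendsto (fun n => (t n / L n) ^ (α/s)) atTop (𝓝 1) := by
    have hc : ContinuousAt (fun x : ℝ => x ^ (α/s)) 1 :=
      Real.continuousAt_rpow_const 1 (α/s) (Or.inl one_ne_zero)
    have := hc.tendsto.comp htL
    simpa [Function.comp_def] using this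
  -- (L/t)^(1/2) → 1
  have hB : Tendsto (fun n => (L n / t n) ^ ((1:ℝ)/2)) atTop (𝓝 1) := by
    have hc : ContinuousAt (fun x : ℝ => x ^ ((1:ℝ)/2)) 1 :=
      Real.continuousAt_rpow_const 1 _ (Or.inl one_ne_zero)
    have := hc.tendsto.comp hLt
    simpa [Function.comp_def] using this
  -- log t / t^(1/2) → 0
  have h3 : Tendsto (fun n => Real.log (t n) / (t n) ^ ((1:ℝ)/2)) atTop (𝓝 0) :=
    (isLittleO_log_rpow_atTop (by norm_num : (0:ℝ) < 1/2)).tendsto_div_nhds_zero.comp htt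
  -- d = t^(1/2) - L^(1/2) → -b0/2
  have hd : Tendsto (fun n => (t n) ^ ((1:ℝ)/2) - (L n) ^ ((1:ℝ)/2)) atTop (𝓝 (-b0/2)) := by
    have hnum : Tendsto (fun n : ℕ =>
        -((α/s) * (Real.log (t n) / (t n) ^ ((1:ℝ)/2)) + b0)) atTop (𝓝 (-((α/s) * 0 + b0))) :=
      ((h3.const_mul (α/s)).add_const b0).neg
    have hden : Tendsto (fun n : ℕ => 1 + (L n / t n) ^ ((1:ℝ)/2)) atTop (𝓝 (1 + 1)) :=
      tendsto_const_nhds.add hB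
    have hlim := hnum.div hden (by norm_num)
    have heq : -((α/s) * 0 + b0) / (1 + 1) = -b0/2 := by ring
    rw [heq] at hlim
    refine hlim.congr' ?_
    filter_upwards [htpos, hLpos] with n hn hLn
    simp only [Pi.div_apply]
    set x := (t n) ^ ((1:ℝ)/2) with hx
    set y := (L n) ^ ((1:ℝ)/2) with hy
    have hxpos : 0 < x := Real.rpow_pos_of_pos hn _
    have hypos : 0 < y := Real.rpow_pos_of_pos hLn _
    have hx2 : x * x = t n := by rw [hx, ← Real.rpow_add hn]; norm_num
    have hy2 : y * y = L n := by rw [hy, ← Real.rpow_add hLn]; norm_num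
    have hdiv : (L n / t n) ^ ((1:ℝ)/2) = y / x := by
      rw [Real.div_rpow hLn.le hn.le]
    rw [hdiv]
    have hLeq : L n = t n + (α/s) * Real.log (t n) + b0 * x := by rw [hLdef]
    have hden2 : (0:ℝ) < 1 + y / x := by positivity
    have hss : s * s⁻¹ = 1 := mul_inv_cancel₀ hs'
    rw [div_eq_iff hden2.ne']
    field_simp
    linear_combination (-(s)) * hx2 + (s) * hy2 + (s) * hLeq
      + (α * Real.log (t n)) * hss
  -- main eventual identity
  have key : ∀ᶠ n : ℕ in atTop,
      (2*b) ^ (α/s) * (t n / L n) ^ (α/s) *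
        Real.exp (b0 * ((t n) ^ ((1:ℝ)/2) - (L n) ^ ((1:ℝ)/2)))
      = Real.exp (2*b / (h n) ^ s + 2*a / (h n) ^ (s/2)) * (h n) ^ α / (n : ℝ) := by
    filter_upwards [htpos, hLpos, eventually_gt_atTop 0] with n hn hLn hn0
    have hn0' : (0:ℝ) < (n : ℝ) := by exact_mod_cast hn0
    have hhn : h n = (2*b) ^ (1/s) * (L n) ^ (-(1/s)) := hh n
    have hLrp : (0:ℝ) < (L n) ^ ((1:ℝ)/2) := Real.rpow_pos_of_pos hLn _
    have h2brp : (0:ℝ) < (2*b) ^ ((1:ℝ)/2) := Real.rpow_pos_of_pos h2b _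
    have e1 : (h n) ^ s = (2*b) * (L n)⁻¹ := by
      rw [hhn, Real.mul_rpow (Real.rpow_nonneg h2b.le _) (Real.rpow_nonneg hLn.le _),
        ← Real.rpow_mul h2b.le, ← Real.rpow_mul hLn.le,
        show (1/s)*s = 1 by field_simp, show (-(1/s))*s = -1 by field_simp,
        Real.rpow_one, Real.rpow_neg_one]
    have e2 : 2*b / (h n) ^ s = L n := by
      rw [e1]; field_simp
    have e3 : (h n) ^ (s/2) = (2*b) ^ ((1:ℝ)/2) * (L n) ^ (-((1:ℝ)/2)) := by
      rw [hhn, Real.mul_rpow (Real.rpow_nonneg h2b.le _) (Real.rpow_nonneg hLn.le _),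
        ← Real.rpow_mul h2b.le, ← Real.rpow_mul hLn.le,
        show (1/s)*(s/2) = 1/2 by field_simp,
        show (-(1/s))*(s/2) = -(1/2) by field_simp]
    have e4 : 2*a / (h n) ^ (s/2) = (-b0) * (L n) ^ ((1:ℝ)/2) := by
      rw [e3, hb0, Real.rpow_neg hLn.le]
      field_simp
    have e5 : (h n) ^ α = (2*b) ^ (α/s) * (L n) ^ (-(α/s)) := by
      rw [hhn, Real.mul_rpow (Real.rpow_nonneg h2b.le _) (Real.rpow_nonneg hLn.le _),
        ← Real.rpow_mul h2b.le, ← Real.rpow_mul hLn.le,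
        show (1/s)*α = α/s by field_simp,
        show (-(1/s))*α = -(α/s) by field_simp]
    have expand : 2*b / (h n) ^ s + 2*a / (h n) ^ (s/2)
        = t n + Real.log (t n) * (α/s) + b0 * ((t n) ^ ((1:ℝ)/2) - (L n) ^ ((1:ℝ)/2)) := by
      rw [e2, e4, hLdef]; ring
    rw [expand, e5, Real.exp_add, Real.exp_add,
      show Real.exp (t n) = (n : ℝ) from Real.exp_log hn0',
      ← Real.rpow_def_of_pos hn, Real.div_rpow hn.le hLn.le, Real.rpow_neg hLn.le]
    field_simp
  -- conclusion
  refine isBigO_of_div_tendsto_nhds ?_ ((2*b) ^ (α/s) * 1 * Real.exp (b0 * (-b0/2))) ?_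
  · filter_upwards [eventually_gt_atTop 0] with n hn h0
    exact absurd h0 (by positivity)
  · have base : Tendsto (fun n : ℕ => (2*b) ^ (α/s) * (t n / L n) ^ (α/s) *
        Real.exp (b0 * ((t n) ^ ((1:ℝ)/2) - (L n) ^ ((1:ℝ)/2)))) atTop
        (𝓝 ((2*b) ^ (α/s) * 1 * Real.exp (b0 * (-b0/2)))) :=
      (tendsto_const_nhds.mul hA).mul ((Real.continuous_exp.tendsto _).comp (hd.const_mul b0))
    refine base.congr' ?_
    filter_upwards [key] with n hkey
    simpa using hkey
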